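/- Let (V⁴, g) be an oriented four-dimensional Euclidean vector space with algebraic Weyl tensor W such that W⁺ = 0 and W⁻ : Λ⁻ → Λ⁻ is invertible. If h is a trace-free symmetric endomorphism belonging to S_W (equivalently, satisfying W★(h) = 0 for the extension of W to symmetric tensors), then h = 0. -/

import Mathlib

/- Common setup: algebraic Weyl curvature tensors on a Euclidean vector space. -/

open scoped RealInnerProductSpace
open Finset

/-- A curvature-type 4-linear tensor on `V`. -/
abbrev Tensor4 (V : Type*) [NormedAddCommGroup V] [InnerProductSpace ℝ V] : Type _ :=
  V →ₗ[ℝ] V →ₗ[ℝ] V →ₗ[ℝ] V →ₗ[ℝ] ℝ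

variable {V : Type*} [NormedAddCommGroup V] [InnerProductSpace ℝ V] [FiniteDimensional ℝ V]

/-- `W` is an algebraic Weyl curvature tensor: it has the symmetries of a curvature
tensor, satisfies the first Bianchi identity, and is totally trace-free. -/
structure IsWeylTensor (W : Tensor4 V) : Prop where
  antisym₁ : ∀ x y z u, W x y z u = - W y x z u
  antisym₂ : ∀ x y z u, W x y z u = - W x y u z
  pair_symm : ∀ x y z u, W x y z u = W z u x y
  bianchi : ∀ x y z u, W x y z u + W y z x u + W z x y u = 0
  trace_free : ∀ (b : OrthonormalBasis (Fin (Module.finrank ℝ V)) ℝ V) (x y : V),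
      ∑ i, W x (b i) y (b i) = 0

/-- The extension of `W` to endomorphisms, `W(h) = Σᵢ W(eᵢ, ·, h eᵢ, ·)`,
viewed as a bilinear form (identified with an endomorphism via the metric). -/
noncomputable def weylExt {ι : Type*} [Fintype ι]
    (W : Tensor4 V) (b : OrthonormalBasis ι ℝ V) (h : V →ₗ[ℝ] V) (v w : V) : ℝ :=
  ∑ i, W (b i) v (h (b i)) w

/-- The space `E_W`: endomorphisms `h` with `W(x,y,hz,·) + W(y,z,hx,·) + W(z,x,hy,·) = 0`. -/
def memE (W : Tensor4 V) (h : V →ₗ[ℝ] V) : Prop :=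
  ∀ x y z u, W x y (h z) u + W y z (h x) u + W z x (h y) u = 0

/-- The Lie algebra `g_W` of the symmetry group of `W`. -/
def memG (W : Tensor4 V) (h : V →ₗ[ℝ] V) : Prop :=
  ∀ x y z u, W (h x) y z u + W x (h y) z u + W x y (h z) u + W x y z (h u) = 0

/-- Skew-symmetric endomorphisms (identified with 2-forms). -/
def IsSkew (F : V →ₗ[ℝ] V) : Prop := ∀ v w, ⟪F v, w⟫ = - ⟪v, F w⟫

/-- Symmetric endomorphisms. -/
def IsSym (F : V →ₗ[ℝ] V) : Prop := ∀ v w, ⟪F v, w⟫ = ⟪v, F w⟫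

/-- The bilinear form `g(F·,·)` associated to an endomorphism `F`. -/
noncomputable def form (F : V →ₗ[ℝ] V) (v w : V) : ℝ := ⟪F v, w⟫

/- Four-dimensional setup: (anti-)self-duality of 2-forms with respect to the orientation
determined by a positively oriented orthonormal basis `e` of `V⁴`. -/

/-- A 2-form `α` is self-dual with respect to the oriented orthonormal basis `e`. -/
def SelfDual (e : OrthonormalBasis (Fin 4) ℝ V) (α : V → V → ℝ) : Prop :=
  α (e 0) (e 1) = α (e 2) (e 3) ∧ α (e 0) (e 2) = α (e 3) (e 1) ∧
    α (e 0) (e 3) = α (e 1) (e 2)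

/-- A 2-form `α` is anti-self-dual with respect to the oriented orthonormal basis `e`. -/
def AntiSelfDual (e : OrthonormalBasis (Fin 4) ℝ V) (α : V → V → ℝ) : Prop :=
  α (e 0) (e 1) = - α (e 2) (e 3) ∧ α (e 0) (e 2) = - α (e 3) (e 1) ∧
    α (e 0) (e 3) = - α (e 1) (e 2)


/- ========== Auxiliary lemmas ========== -/

set_option linter.unusedSectionVars false

section Aux

variable {V : Type*} [NormedAddCommGroup V] [InnerProductSpace ℝ V] [FiniteDimensional ℝ V]

/-- Bilinear form `(x, y) ↦ W v x y w`. -/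
noncomputable def B23aux (W : Tensor4 V) (v w : V) : V →ₗ[ℝ] V →ₗ[ℝ] ℝ :=
  LinearMap.mk₂ ℝ (fun x y => W v x y w)
    (fun x x' y => by simp) (fun c x y => by simp)
    (fun x y y' => by simp) (fun x c y => by simp)

/-- Bilinear form `(x, y) ↦ W x v y w`. -/
noncomputable def B13aux (W : Tensor4 V) (v w : V) : V →ₗ[ℝ] V →ₗ[ℝ] ℝ :=
  LinearMap.mk₂ ℝ (fun x y => W x v y w)
    (fun x x' y => by simp) (fun c x y => by simp)
    (fun x y y' => by simp) (fun x c y => by simp)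

lemma transfer_aux (e : OrthonormalBasis (Fin 4) ℝ V)
    (B : V →ₗ[ℝ] V →ₗ[ℝ] ℝ) (P P' C : V →ₗ[ℝ] V)
    (hP : ∀ a b : V, ⟪P a, b⟫ = ⟪a, P' b⟫) :
    ∑ i, B (P (e i)) (C (e i)) = ∑ i, B (e i) (C (P' (e i))) := by
  have h1 : ∀ i, B (P (e i)) (C (e i)) = ∑ k, ⟪e k, P (e i)⟫ * B (e k) (C (e i)) := by
    intro i
    conv_lhs => rw [← e.sum_repr' (P (e i))]
    simp [map_sum, LinearMap.sum_apply]
  have h2 : ∀ k, B (e k) (C (P' (e k))) = ∑ i, ⟪e i, P' (e k)⟫ * B (e k) (C (e i)) := by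
    intro k
    conv_lhs => rw [← e.sum_repr' (P' (e k))]
    simp [map_sum, LinearMap.sum_apply]
  simp_rw [h1, h2]
  rw [Finset.sum_comm]
  congr 1; ext i; congr 1; ext k
  rw [real_inner_comm (P (e k)) (e i), hP]

lemma skew_neg_adj_aux {J : V →ₗ[ℝ] V} (hJ : IsSkew J) :
    ∀ a b : V, ⟪J a, b⟫ = ⟪a, (-J) b⟫ := by
  intro a b; rw [hJ]; simp

lemma L1aux (e : OrthonormalBasis (Fin 4) ℝ V) (W : Tensor4 V) (hW : IsWeylTensor W)
    (J : V →ₗ[ℝ] V) (hJ : IsSkew J)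
    (hS : ∀ v w, ∑ i, W (e i) v (J (e i)) w = 0) :
    ∀ v w, ∑ i, W (J (e i)) (e i) v w = 0 := by
  intro v w
  have h2 : ∑ i, W v (J (e i)) (e i) w = -∑ i, W v (e i) (J (e i)) w := by
    have := transfer_aux e (B23aux W v w) J (-J) LinearMap.id (skew_neg_adj_aux hJ)
    simpa [B23aux, Finset.sum_neg_distrib] using this
  have h3 : ∑ i, W v (e i) (J (e i)) w = 0 := by
    have : ∑ i, W v (e i) (J (e i)) w = -∑ i, W (e i) v (J (e i)) w := by
      simp_rw [fun i => hW.antisym₁ v (e i) (J (e i)) w]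
      exact Finset.sum_neg_distrib _
    rw [this, hS v w, neg_zero]
  have hb : ∑ i, W (J (e i)) (e i) v w
      = ∑ i, (-(W (e i) v (J (e i)) w) - W v (J (e i)) (e i) w) := by
    refine Finset.sum_congr rfl (fun i _ => ?_)
    have := hW.bianchi (J (e i)) (e i) v w; linarith
  rw [hb, Finset.sum_sub_distrib, Finset.sum_neg_distrib, hS v w, h2, h3]
  ring

lemma part1aux (e : OrthonormalBasis (Fin 4) ℝ V) (W : Tensor4 V) (hW : IsWeylTensor W)
    (h J : V →ₗ[ℝ] V) (hJ : IsSkew J) (hE : memE W h)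
    (hS : ∀ v w, ∑ i, W (e i) v (J (e i)) w = 0) :
    ∀ v w, ∑ i, W (e i) v (h (J (e i))) w = 0 := by
  have hT := L1aux e W hW J hJ hS
  intro v w
  have hA : ∑ i, W v (J (e i)) (h (e i)) w = ∑ i, W (e i) v (h (J (e i))) w := by
    have := transfer_aux e (B23aux W v w) J (-J) h (skew_neg_adj_aux hJ)
    simp only [B23aux, LinearMap.mk₂_apply, map_neg, LinearMap.neg_apply,
      Finset.sum_neg_distrib] at this
    rw [this]
    simp_rw [fun i => hW.antisym₁ v (e i) (h (J (e i))) w]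
    rw [Finset.sum_neg_distrib, neg_neg]
  have key : ∑ i, W (e i) v (h (J (e i))) w
      = ∑ i, (-(W v (J (e i)) (h (e i)) w) - W (J (e i)) (e i) (h v) w) := by
    refine Finset.sum_congr rfl (fun i _ => ?_)
    have := hE (e i) v (J (e i)) w; linarith
  rw [Finset.sum_sub_distrib, Finset.sum_neg_distrib, hT (h v) w, hA] at key
  linarith

lemma part2aux (e : OrthonormalBasis (Fin 4) ℝ V) (W : Tensor4 V) (hW : IsWeylTensor W)
    (h J : V →ₗ[ℝ] V) (hJ : IsSkew J) (hsym : IsSym h) (hE : memE W h)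
    (hS : ∀ v w, ∑ i, W (e i) v (J (e i)) w = 0) :
    ∀ v w, ∑ i, W (e i) v (J (h (e i))) w = 0 := by
  have hT := L1aux e W hW J hJ hS
  have hp1 := part1aux e W hW h J hJ hE hS
  intro v w
  have step1 : ∑ i, W (e i) v (J (h (e i))) w = ∑ i, W (h (e i)) v (J (e i)) w := by
    have := transfer_aux e (B13aux W v w) h h J hsym
    simp only [B13aux, LinearMap.mk₂_apply] at this
    rw [this]
  have step2 : ∑ i, W (h (e i)) v (J (e i)) w
      = ∑ i, (-(W w (e i) (h (J (e i))) v) - W (e i) (J (e i)) (h w) v) := by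
    refine Finset.sum_congr rfl (fun i _ => ?_)
    have h1 := hW.pair_symm (h (e i)) v (J (e i)) w
    have h2 := hE (J (e i)) w (e i) v
    linarith
  have h4 : ∑ i, W w (e i) (h (J (e i))) v = 0 := by
    have : ∑ i, W w (e i) (h (J (e i))) v = -∑ i, W (e i) w (h (J (e i))) v := by
      simp_rw [fun i => hW.antisym₁ w (e i) (h (J (e i))) v]
      exact Finset.sum_neg_distrib _
    rw [this, hp1 w v, neg_zero]
  have h5 : ∑ i, W (e i) (J (e i)) (h w) v = 0 := by
    have : ∑ i, W (e i) (J (e i)) (h w) v = -∑ i, W (J (e i)) (e i) (h w) v := by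
      simp_rw [fun i => hW.antisym₁ (e i) (J (e i)) (h w) v]
      exact Finset.sum_neg_distrib _
    rw [this, hT (h w) v, neg_zero]
  rw [step1, step2, Finset.sum_sub_distrib, Finset.sum_neg_distrib, h4, h5]
  ring

lemma mainWaux (e : OrthonormalBasis (Fin 4) ℝ V) (W : Tensor4 V) (hW : IsWeylTensor W)
    (h J : V →ₗ[ℝ] V) (hJ : IsSkew J) (hsym : IsSym h) (hE : memE W h)
    (hS : ∀ v w, ∑ i, W (e i) v (J (e i)) w = 0) :
    ∀ v w, weylExt W e (h ∘ₗ J + J ∘ₗ h) v w = 0 := by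
  intro v w
  have p1 := part1aux e W hW h J hJ hE hS v w
  have p2 := part2aux e W hW h J hJ hsym hE hS v w
  unfold weylExt
  simp only [LinearMap.add_apply, LinearMap.comp_apply, map_add, Finset.sum_add_distrib]
  rw [p1, p2, add_zero]

/-- Linear map defined by its values on the orthonormal basis. -/
noncomputable def JmapAux (e : OrthonormalBasis (Fin 4) ℝ V) (f : Fin 4 → V) : V →ₗ[ℝ] V :=
  e.toBasis.constr ℝ f

lemma JmapAux_apply (e : OrthonormalBasis (Fin 4) ℝ V) (f : Fin 4 → V) (i : Fin 4) :
    JmapAux e f (e i) = f i := by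
  conv_lhs => rw [← e.coe_toBasis]
  exact e.toBasis.constr_basis ℝ f i

lemma skew_of_basis_aux (e : OrthonormalBasis (Fin 4) ℝ V) (F : V →ₗ[ℝ] V)
    (hb : ∀ i j, ⟪F (e i), e j⟫ = -⟪e i, F (e j)⟫) : IsSkew F := by
  intro v w
  rw [← e.sum_repr' v, ← e.sum_repr' w]
  simp only [map_sum, LinearMap.map_smul, sum_inner, inner_sum, real_inner_smul_left,
    real_inner_smul_right, inner_neg_left, inner_neg_right]
  simp_rw [hb]
  simp [Finset.mul_sum, mul_neg, Finset.sum_neg_distrib]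

lemma anticomm_skew_aux (h J : V →ₗ[ℝ] V) (hsym : IsSym h) (hJ : IsSkew J) :
    IsSkew (h ∘ₗ J + J ∘ₗ h) := by
  intro v w
  simp only [LinearMap.add_apply, LinearMap.comp_apply, inner_add_left, inner_add_right]
  have a1 : ⟪h (J v), w⟫ = ⟪J v, h w⟫ := hsym _ _
  have a2 : ⟪J v, h w⟫ = -⟪v, J (h w)⟫ := hJ _ _
  have a3 : ⟪J (h v), w⟫ = -⟪h v, J w⟫ := hJ _ _
  have a4 : ⟪h v, J w⟫ = ⟪v, h (J w)⟫ := hsym _ _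
  linarith

lemma comp_formula_aux (h J : V →ₗ[ℝ] V) (hJ : IsSkew J) (x y : V) :
    form (h ∘ₗ J + J ∘ₗ h) x y = ⟪h (J x), y⟫ - ⟪h x, J y⟫ := by
  simp only [form, LinearMap.add_apply, LinearMap.comp_apply, inner_add_left]
  rw [hJ (h x) y]
  ring

end Aux

/-- in dimension 4, if `W⁺ = 0` and `W⁻` is invertible on `Λ⁻`, then any
trace-free symmetric `h ∈ S_W` vanishes. -/
theorem stmt17 (e : OrthonormalBasis (Fin 4) ℝ V)
    (W : Tensor4 V) (hW : IsWeylTensor W)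
    -- `W⁺ = 0` : `W` annihilates all self-dual 2-forms
    (hWp : ∀ F : V →ₗ[ℝ] V, IsSkew F → SelfDual e (form F) →
      ∀ v w, weylExt W e F v w = 0)
    -- `W⁻` is invertible on `Λ⁻`
    (hWm : ∀ F : V →ₗ[ℝ] V, IsSkew F → AntiSelfDual e (form F) →
      (∀ v w, weylExt W e F v w = 0) → F = 0)
    (h : V →ₗ[ℝ] V) (hsym : IsSym h) (htf : LinearMap.trace ℝ V h = 0)
    (hE : memE W h) :
    h = 0 := by
  classical
  have hee : ∀ i j : Fin 4, ⟪e i, e j⟫ = if i = j then (1:ℝ) else 0 :=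
    orthonormal_iff_ite.mp e.orthonormal
  -- trace identity
  have htr : ⟪h (e 0), e 0⟫ + ⟪h (e 1), e 1⟫ + ⟪h (e 2), e 2⟫ + ⟪h (e 3), e 3⟫ = 0 := by
    have h0 := htf
    rw [LinearMap.trace_eq_matrix_trace ℝ e.toBasis] at h0
    simp only [Matrix.trace, Matrix.diag, LinearMap.toMatrix_apply,
      OrthonormalBasis.coe_toBasis, OrthonormalBasis.coe_toBasis_repr_apply,
      OrthonormalBasis.repr_apply_apply, Fin.sum_univ_four] at h0
    rw [real_inner_comm (e 0) (h (e 0)), real_inner_comm (e 1) (h (e 1)),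
      real_inner_comm (e 2) (h (e 2)), real_inner_comm (e 3) (h (e 3))]
    linarith
  have hmsymm : ∀ i j : Fin 4, ⟪h (e i), e j⟫ = ⟪h (e j), e i⟫ := by
    intro i j
    rw [hsym (e i) (e j)]
    exact real_inner_comm _ _
  -- the three self-dual complex structures
  set J₁ := JmapAux e ![e 1, -e 0, e 3, -e 2] with hJ1def
  set J₂ := JmapAux e ![e 2, -e 3, -e 0, e 1] with hJ2def
  have hJ1 : ∀ i, J₁ (e i) = ![e 1, -e 0, e 3, -e 2] i := fun i => JmapAux_apply e _ i
  have hJ2 : ∀ i, J₂ (e i) = ![e 2, -e 3, -e 0, e 1] i := fun i => JmapAux_apply e _ i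
  set J₃ := J₁ ∘ₗ J₂ with hJ3def
  have hJ3 : ∀ i, J₃ (e i) = ![e 3, e 2, -e 1, -e 0] i := by
    intro i
    fin_cases i <;>
      simp [hJ3def, LinearMap.comp_apply, hJ1, hJ2, map_neg]
  have skew1 : IsSkew J₁ := by
    refine skew_of_basis_aux e _ (fun i j => ?_)
    fin_cases i <;> fin_cases j <;>
      simp [hJ1, hee, inner_neg_left, inner_neg_right]
  have skew2 : IsSkew J₂ := by
    refine skew_of_basis_aux e _ (fun i j => ?_)
    fin_cases i <;> fin_cases j <;>
      simp [hJ2, hee, inner_neg_left, inner_neg_right]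
  have skew3 : IsSkew J₃ := by
    refine skew_of_basis_aux e _ (fun i j => ?_)
    fin_cases i <;> fin_cases j <;>
      simp [hJ3, hee, inner_neg_left, inner_neg_right]
  have sd1 : SelfDual e (form J₁) := by
    refine ⟨?_, ?_, ?_⟩ <;> simp [form, hJ1, hee, inner_neg_left, inner_neg_right]
  have sd2 : SelfDual e (form J₂) := by
    refine ⟨?_, ?_, ?_⟩ <;> simp [form, hJ2, hee, inner_neg_left, inner_neg_right]
  have sd3 : SelfDual e (form J₃) := by
    refine ⟨?_, ?_, ?_⟩ <;> simp [form, hJ3, hee, inner_neg_left, inner_neg_right]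
  -- from hWp, the contraction of W with each Jₐ vanishes
  have hS1 : ∀ v w, ∑ i, W (e i) v (J₁ (e i)) w = 0 := by
    intro v w; simpa [weylExt] using hWp J₁ skew1 sd1 v w
  have hS2 : ∀ v w, ∑ i, W (e i) v (J₂ (e i)) w = 0 := by
    intro v w; simpa [weylExt] using hWp J₂ skew2 sd2 v w
  have hS3 : ∀ v w, ∑ i, W (e i) v (J₃ (e i)) w = 0 := by
    intro v w; simpa [weylExt] using hWp J₃ skew3 sd3 v w
  -- the anticommutators are anti-self-dual
  have asd1 : AntiSelfDual e (form (h ∘ₗ J₁ + J₁ ∘ₗ h)) := by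
    refine ⟨?_, ?_, ?_⟩ <;>
    · rw [comp_formula_aux h J₁ skew1, comp_formula_aux h J₁ skew1]
      simp only [hJ1, Matrix.cons_val_zero, Matrix.cons_val_one, Matrix.head_cons,
        Matrix.cons_val_two, Matrix.tail_cons, Matrix.cons_val_three, map_neg,
        inner_neg_left, inner_neg_right]
      linarith [htr, hmsymm 0 3, hmsymm 1 2, hmsymm 0 2, hmsymm 1 3, hmsymm 0 1, hmsymm 2 3]
  have asd2 : AntiSelfDual e (form (h ∘ₗ J₂ + J₂ ∘ₗ h)) := by
    refine ⟨?_, ?_, ?_⟩ <;>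
    · rw [comp_formula_aux h J₂ skew2, comp_formula_aux h J₂ skew2]
      simp only [hJ2, Matrix.cons_val_zero, Matrix.cons_val_one, Matrix.head_cons,
        Matrix.cons_val_two, Matrix.tail_cons, Matrix.cons_val_three, map_neg,
        inner_neg_left, inner_neg_right]
      linarith [htr, hmsymm 0 3, hmsymm 1 2, hmsymm 0 2, hmsymm 1 3, hmsymm 0 1, hmsymm 2 3]
  have asd3 : AntiSelfDual e (form (h ∘ₗ J₃ + J₃ ∘ₗ h)) := by
    refine ⟨?_, ?_, ?_⟩ <;>
    · rw [comp_formula_aux h J₃ skew3, comp_formula_aux h J₃ skew3]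
      simp only [hJ3, Matrix.cons_val_zero, Matrix.cons_val_one, Matrix.head_cons,
        Matrix.cons_val_two, Matrix.tail_cons, Matrix.cons_val_three, map_neg,
        inner_neg_left, inner_neg_right]
      linarith [htr, hmsymm 0 3, hmsymm 1 2, hmsymm 0 2, hmsymm 1 3, hmsymm 0 1, hmsymm 2 3]
  -- W annihilates the anticommutators, so they vanish by invertibility of W⁻
  have eqF1 : h ∘ₗ J₁ + J₁ ∘ₗ h = 0 :=
    hWm _ (anticomm_skew_aux h J₁ hsym skew1) asd1
      (mainWaux e W hW h J₁ skew1 hsym hE hS1)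
  have eqF2 : h ∘ₗ J₂ + J₂ ∘ₗ h = 0 :=
    hWm _ (anticomm_skew_aux h J₂ hsym skew2) asd2
      (mainWaux e W hW h J₂ skew2 hsym hE hS2)
  have eqF3 : h ∘ₗ J₃ + J₃ ∘ₗ h = 0 :=
    hWm _ (anticomm_skew_aux h J₃ hsym skew3) asd3
      (mainWaux e W hW h J₃ skew3 hsym hE hS3)
  -- pointwise anticommutation relations
  have a1 : ∀ v, h (J₁ v) = -(J₁ (h v)) := by
    intro v
    have := LinearMap.congr_fun eqF1 v
    simp only [LinearMap.add_apply, LinearMap.comp_apply, LinearMap.zero_apply] at this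
    exact eq_neg_of_add_eq_zero_left this
  have a2 : ∀ v, h (J₂ v) = -(J₂ (h v)) := by
    intro v
    have := LinearMap.congr_fun eqF2 v
    simp only [LinearMap.add_apply, LinearMap.comp_apply, LinearMap.zero_apply] at this
    exact eq_neg_of_add_eq_zero_left this
  have a3 : ∀ v, h (J₁ (J₂ v)) = -(J₁ (J₂ (h v))) := by
    intro v
    have := LinearMap.congr_fun eqF3 v
    simp only [hJ3def, LinearMap.add_apply, LinearMap.comp_apply,
      LinearMap.zero_apply] at this
    exact eq_neg_of_add_eq_zero_left this
  -- h also commutes with J₃ = J₁ ∘ J₂, hence J₃ ∘ h = 0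
  have comm3 : ∀ v, h (J₁ (J₂ v)) = J₁ (J₂ (h v)) := by
    intro v
    rw [a1 (J₂ v), a2 v]
    simp
  have hzero : ∀ v, J₁ (J₂ (h v)) = 0 := by
    intro v
    have h6 : J₁ (J₂ (h v)) = -(J₁ (J₂ (h v))) := (comm3 v).symm.trans (a3 v)
    have h7 : J₁ (J₂ (h v)) + J₁ (J₂ (h v)) = 0 := by
      rw [← sub_neg_eq_add, ← h6, sub_self]
    have h8 : (2:ℝ) • (J₁ (J₂ (h v))) = 0 := by rw [two_smul]; exact h7
    simpa using (smul_eq_zero.mp h8).resolve_left (by norm_num)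
  -- squares of J₁, J₂ are -1
  have sq1 : ∀ i, J₁ (J₁ (e i)) = -(e i) := by
    intro i; fin_cases i <;> simp [hJ1, map_neg]
  have sq2 : ∀ i, J₂ (J₂ (e i)) = -(e i) := by
    intro i; fin_cases i <;> simp [hJ2, map_neg]
  have sq1' : J₁ ∘ₗ J₁ = -LinearMap.id := by
    refine e.toBasis.ext (fun i => ?_)
    simp only [OrthonormalBasis.coe_toBasis, LinearMap.comp_apply, LinearMap.neg_apply,
      LinearMap.id_apply]
    exact sq1 i
  have sq2' : J₂ ∘ₗ J₂ = -LinearMap.id := by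
    refine e.toBasis.ext (fun i => ?_)
    simp only [OrthonormalBasis.coe_toBasis, LinearMap.comp_apply, LinearMap.neg_apply,
      LinearMap.id_apply]
    exact sq2 i
  have sq1p : ∀ x, J₁ (J₁ x) = -x := by
    intro x
    have := LinearMap.congr_fun sq1' x
    simpa using this
  have sq2p : ∀ x, J₂ (J₂ x) = -x := by
    intro x
    have := LinearMap.congr_fun sq2' x
    simpa using this
  -- conclude
  ext v
  have h1 : J₁ (J₁ (J₂ (h v))) = 0 := by rw [hzero v, map_zero]
  rw [sq1p (J₂ (h v))] at h1
  have h2 : J₂ (h v) = 0 := by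
    have := neg_eq_zero.mp h1; exact this
  have h3 : J₂ (J₂ (h v)) = 0 := by rw [h2, map_zero]
  rw [sq2p (h v)] at h3
  simpa using neg_eq_zero.mp h3
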